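/- arXiv:2506.10748 — 3 statements merged into one kernel-verified Lean document; each statement's English description precedes it below -/
import Mathlib

section
/- Let (P_n) and (Q_n) be sequences of probability measures on ℝ^{N_n} having finite moments of all orders, and let (D_n) be a sequence of natural-number degree bounds. If Adv_{≤D_n}(P_n, Q_n) = 1 + o(1) as n → ∞, then no sequence of real multivariate polynomials f_n in N_n variables of total degree at most D_n weakly separates (P_n) and (Q_n). -/
open MeasureTheory MvPolynomial Filter Asymptotics

noncomputable section

/-- The mean of a polynomial function under a measure on `σ → ℝ`. -/
def polyMean {σ : Type} (P : Measure (σ → ℝ)) (f : MvPolynomial σ ℝ) : ℝ :=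
  ∫ y, eval y f ∂P

/-- The variance of a polynomial function under a measure on `σ → ℝ`. -/
def polyVar {σ : Type} (P : Measure (σ → ℝ)) (f : MvPolynomial σ ℝ) : ℝ :=
  ∫ y, (eval y f - polyMean P f) ^ 2 ∂P

/-- The degree-`D` advantage `Adv_{≤D}(P,Q)`. -/
def Adv {σ : Type} (P Q : Measure (σ → ℝ)) (D : ℕ) : ℝ :=
  sSup {r : ℝ | ∃ f : MvPolynomial σ ℝ, f.totalDegree ≤ D ∧
    0 < (∫ y, (eval y f) ^ 2 ∂Q) ∧
    r = (∫ y, eval y f ∂P) / Real.sqrt (∫ y, (eval y f) ^ 2 ∂Q)}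

/-- A sequence of polynomials weakly separates `(P_n)`, `(Q_n)` if
`sqrt(max(Var_P f, Var_Q f)) = O(|E_P f − E_Q f|)` as `n → ∞`, with the means
differing for all large `n`. -/
def WeaklySeparates {ι : ℕ → Type} (P Q : ∀ n, Measure (ι n → ℝ))
    (f : ∀ n, MvPolynomial (ι n) ℝ) : Prop :=
  ((fun n => Real.sqrt (max (polyVar (P n) (f n)) (polyVar (Q n) (f n)))) =O[atTop]
    fun n => |polyMean (P n) (f n) - polyMean (Q n) (f n)|) ∧
  ∀ᶠ n in atTop, polyMean (P n) (f n) ≠ polyMean (Q n) (f n)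

-- test polynomial: g = 1 + C a * (f - C m)
lemma test_deg {σ : Type} (f : MvPolynomial σ ℝ) (a m : ℝ) (Dn : ℕ) (hf : f.totalDegree ≤ Dn) :
    ((1 : MvPolynomial σ ℝ) + C a * (f - C m)).totalDegree ≤ Dn := by
  refine (totalDegree_add _ _).trans (max_le (by simp) ?_)
  refine (totalDegree_mul _ _).trans ?_
  simp only [totalDegree_C, zero_add]
  refine (totalDegree_sub _ _).trans ?_  -- name guess
  simp only [totalDegree_C]
  exact max_le hf (Nat.zero_le _)

lemma test_eval {σ : Type} (f : MvPolynomial σ ℝ) (a m : ℝ) (y : σ → ℝ) :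
    eval y ((1 : MvPolynomial σ ℝ) + C a * (f - C m)) = 1 + a * (eval y f - m) := by
  simp

lemma test_meanP {σ : Type} (P : Measure (σ → ℝ)) [IsProbabilityMeasure P]
    (hPmom : ∀ g : MvPolynomial σ ℝ, Integrable (fun y => eval y g) P)
    (f : MvPolynomial σ ℝ) (a m : ℝ) :
    ∫ y, eval y ((1 : MvPolynomial σ ℝ) + C a * (f - C m)) ∂P
      = 1 + a * (polyMean P f - m) := by
  simp only [test_eval]
  have hint : Integrable (fun y => a * (eval y f - m)) P := by
    simpa using ((hPmom f).sub (integrable_const m)).const_mul a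
  have hint2 : Integrable (fun y => eval y f - m) P := by
    exact (hPmom f).sub (integrable_const m)
  rw [integral_add (integrable_const _) hint, integral_const_mul,
    integral_sub (hPmom f) (integrable_const m)]
  simp [polyMean]

lemma test_sq {σ : Type} (Q : Measure (σ → ℝ)) [IsProbabilityMeasure Q]
    (hQmom : ∀ g : MvPolynomial σ ℝ, Integrable (fun y => eval y g) Q)
    (f : MvPolynomial σ ℝ) (a : ℝ) :
    ∫ y, (eval y ((1 : MvPolynomial σ ℝ) + C a * (f - C (polyMean Q f)))) ^ 2 ∂Q
      = 1 + a ^ 2 * polyVar Q f := by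
  have h1 : Integrable (fun y => eval y f - polyMean Q f) Q := by
    exact (hQmom f).sub (integrable_const _)
  have h2 : Integrable (fun y => (eval y f - polyMean Q f) ^ 2) Q := by
    have := hQmom ((f - C (polyMean Q f)) ^ 2)
    simpa using this
  have heq : ∀ y : σ → ℝ, (eval y ((1 : MvPolynomial σ ℝ) + C a * (f - C (polyMean Q f)))) ^ 2
      = 1 + (2 * a) * (eval y f - polyMean Q f) + a ^ 2 * (eval y f - polyMean Q f) ^ 2 := by
    intro y; simp only [test_eval]; ring
  simp only [heq]
  rw [integral_add (by exact (integrable_const 1).add (h1.const_mul _)) (h2.const_mul _),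
    integral_add (integrable_const 1) (h1.const_mul _), integral_const_mul, integral_const_mul,
    integral_sub (hQmom f) (integrable_const _)]
  simp [polyMean, polyVar]

end

noncomputable section

lemma key {σ : Type} (P Q : Measure (σ → ℝ)) [IsProbabilityMeasure P] [IsProbabilityMeasure Q]
    (hPmom : ∀ g : MvPolynomial σ ℝ, Integrable (fun y => eval y g) P)
    (hQmom : ∀ g : MvPolynomial σ ℝ, Integrable (fun y => eval y g) Q)
    (f : MvPolynomial σ ℝ) (Dn : ℕ) (hdeg : f.totalDegree ≤ Dn)
    (Cb : ℝ) (hCb : 0 < Cb)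
    (hne : polyMean P f ≠ polyMean Q f)
    (hv : polyVar Q f ≤ Cb ^ 2 * (polyMean P f - polyMean Q f) ^ 2) :
    ∃ r ∈ {r : ℝ | ∃ g : MvPolynomial σ ℝ, g.totalDegree ≤ Dn ∧
        0 < (∫ y, (eval y g) ^ 2 ∂Q) ∧
        r = (∫ y, eval y g ∂P) / Real.sqrt (∫ y, (eval y g) ^ 2 ∂Q)},
      Real.sqrt (1 + 1 / Cb ^ 2) ≤ r := by
  set Δ := polyMean P f - polyMean Q f with hΔdef
  have hΔ : Δ ≠ 0 := sub_ne_zero.mpr hne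
  set a : ℝ := 1 / (Cb ^ 2 * Δ) with ha
  set g : MvPolynomial σ ℝ := 1 + C a * (f - C (polyMean Q f)) with hg
  have hvnn : 0 ≤ polyVar Q f := integral_nonneg fun y => sq_nonneg _
  have hmean : ∫ y, eval y g ∂P = 1 + 1 / Cb ^ 2 := by
    rw [hg, test_meanP P hPmom f a (polyMean Q f)]
    have : a * Δ = 1 / Cb ^ 2 := by
      rw [ha]; field_simp
    rw [hΔdef] at this; rw [this]
  have hsq : ∫ y, (eval y g) ^ 2 ∂Q = 1 + a ^ 2 * polyVar Q f := by
    rw [hg, test_sq Q hQmom f a]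
  have hsqpos : 0 < ∫ y, (eval y g) ^ 2 ∂Q := by
    rw [hsq]
    have : 0 ≤ a ^ 2 * polyVar Q f := mul_nonneg (sq_nonneg _) hvnn
    linarith
  refine ⟨_, ⟨g, test_deg f a (polyMean Q f) Dn hdeg, hsqpos, rfl⟩, ?_⟩
  have hbound : a ^ 2 * polyVar Q f ≤ 1 / Cb ^ 2 := by
    calc a ^ 2 * polyVar Q f ≤ a ^ 2 * (Cb ^ 2 * Δ ^ 2) := by
          exact mul_le_mul_of_nonneg_left hv (sq_nonneg _)
      _ = 1 / Cb ^ 2 := by rw [ha]; field_simp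
  have hu : (0:ℝ) < 1 / Cb ^ 2 := by positivity
  have hs2pos : 0 < Real.sqrt (∫ y, (eval y g) ^ 2 ∂Q) := Real.sqrt_pos.mpr hsqpos
  have hs2le : Real.sqrt (∫ y, (eval y g) ^ 2 ∂Q) ≤ Real.sqrt (1 + 1 / Cb ^ 2) := by
    apply Real.sqrt_le_sqrt; rw [hsq]; linarith
  have key1 : Real.sqrt (1 + 1 / Cb ^ 2)
      = (1 + 1 / Cb ^ 2) / Real.sqrt (1 + 1 / Cb ^ 2) := by
    rw [eq_div_iff (by positivity), Real.mul_self_sqrt (by linarith)]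
  rw [hmean, key1]
  gcongr

private theorem statement_1' (N : ℕ → ℕ) (D : ℕ → ℕ)
    (P Q : ∀ n, Measure (Fin (N n) → ℝ))
    (hP : ∀ n, IsProbabilityMeasure (P n)) (hQ : ∀ n, IsProbabilityMeasure (Q n))
    (hPmom : ∀ n (g : MvPolynomial (Fin (N n)) ℝ), Integrable (fun y => eval y g) (P n))
    (hQmom : ∀ n (g : MvPolynomial (Fin (N n)) ℝ), Integrable (fun y => eval y g) (Q n))
    (hAdv : (fun n => sSup {r : ℝ | ∃ f : MvPolynomial (Fin (N n)) ℝ, f.totalDegree ≤ D n ∧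
        0 < (∫ y, (eval y f) ^ 2 ∂(Q n)) ∧
        r = (∫ y, eval y f ∂(P n)) / Real.sqrt (∫ y, (eval y f) ^ 2 ∂(Q n))} - 1)
        =o[atTop] fun _ => (1 : ℝ)) :
    ¬ ∃ f : ∀ n, MvPolynomial (Fin (N n)) ℝ,
        (∀ n, (f n).totalDegree ≤ D n) ∧
        (((fun n => Real.sqrt (max (polyVar (P n) (f n)) (polyVar (Q n) (f n)))) =O[atTop]
          fun n => |polyMean (P n) (f n) - polyMean (Q n) (f n)|) ∧
        ∀ᶠ n in atTop, polyMean (P n) (f n) ≠ polyMean (Q n) (f n)) := by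
  rintro ⟨f, hdeg, hO, hne⟩
  obtain ⟨Cb, hCb, hOb⟩ := hO.exists_pos
  rw [isBigOWith_iff] at hOb
  have hu : (0:ℝ) < 1 / Cb ^ 2 := by positivity
  have hε : (0:ℝ) < Real.sqrt (1 + 1 / Cb ^ 2) - 1 := by
    nlinarith [Real.sq_sqrt (show (0:ℝ) ≤ 1 + 1 / Cb ^ 2 by positivity),
      Real.sqrt_nonneg (1 + 1 / Cb ^ 2)]
  obtain ⟨ε, hεdef⟩ : ∃ ε : ℝ, ε = Real.sqrt (1 + 1 / Cb ^ 2) - 1 := ⟨_, rfl⟩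
  rw [← hεdef] at hε
  obtain ⟨c, hc⟩ : ∃ c : ℝ, c = min ε 1 / 2 := ⟨_, rfl⟩
  have h1' : min ε 1 ≤ ε := min_le_left _ _
  have h2' : min ε 1 ≤ 1 := min_le_right _ _
  have h3' : 0 < min ε 1 := lt_min hε one_pos
  have hcpos : 0 < c := by rw [hc]; linarith
  have hcε : c < ε := by rw [hc]; linarith
  have hc1 : c < 1 := by rw [hc]; linarith
  have hAb := hAdv.bound hcpos
  obtain ⟨n, h1, h2, h3⟩ := (hOb.and (hne.and hAb)).exists
  simp only [Real.norm_eq_abs, norm_one, mul_one] at h1 h3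
  -- extract variance bound
  set Δ := polyMean (P n) (f n) - polyMean (Q n) (f n) with hΔdef
  have hvnnQ : 0 ≤ polyVar (Q n) (f n) := integral_nonneg fun y => sq_nonneg _
  have hmaxnn : 0 ≤ max (polyVar (P n) (f n)) (polyVar (Q n) (f n)) :=
    le_max_of_le_right hvnnQ
  have hsqrt : Real.sqrt (max (polyVar (P n) (f n)) (polyVar (Q n) (f n))) ≤ Cb * |Δ| := by
    have := h1
    rwa [abs_of_nonneg (Real.sqrt_nonneg _), abs_abs] at this
  have hv : polyVar (Q n) (f n) ≤ Cb ^ 2 * Δ ^ 2 := by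
    have hmax : max (polyVar (P n) (f n)) (polyVar (Q n) (f n)) ≤ (Cb * |Δ|) ^ 2 := by
      have := Real.sq_sqrt hmaxnn
      calc max (polyVar (P n) (f n)) (polyVar (Q n) (f n))
          = Real.sqrt (max (polyVar (P n) (f n)) (polyVar (Q n) (f n))) ^ 2 := this.symm
        _ ≤ (Cb * |Δ|) ^ 2 := by
            apply pow_le_pow_left₀ (Real.sqrt_nonneg _) hsqrt
    calc polyVar (Q n) (f n) ≤ max (polyVar (P n) (f n)) (polyVar (Q n) (f n)) :=
          le_max_right _ _
      _ ≤ (Cb * |Δ|) ^ 2 := hmax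
      _ = Cb ^ 2 * Δ ^ 2 := by rw [mul_pow, sq_abs]
  have := hP n; have := hQ n
  obtain ⟨r, hrmem, hr⟩ := key (P n) (Q n) (hPmom n) (hQmom n) (f n) (D n) (hdeg n)
    Cb hCb h2 hv
  set S := {r : ℝ | ∃ g : MvPolynomial (Fin (N n)) ℝ, g.totalDegree ≤ D n ∧
        0 < (∫ y, (eval y g) ^ 2 ∂(Q n)) ∧
        r = (∫ y, eval y g ∂(P n)) / Real.sqrt (∫ y, (eval y g) ^ 2 ∂(Q n))} with hS
  by_cases hbdd : BddAbove S
  · have hle : r ≤ sSup S := le_csSup hbdd hrmem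
    have : 1 + ε ≤ sSup S := by
      have : 1 + ε = Real.sqrt (1 + 1 / Cb ^ 2) := by rw [hεdef]; ring
      linarith [hr.trans hle, this ▸ le_refl (1 + ε)]
    have habs : ε ≤ |sSup S - 1| := by
      rw [abs_of_nonneg (by linarith)]; linarith
    linarith [h3, habs]
  · have h0 : sSup S = 0 := Real.sSup_of_not_bddAbove hbdd
    rw [h0] at h3
    simp at h3
    linarith


/-- If `Adv_{≤D_n}(P_n, Q_n) = 1 + o(1)` as `n → ∞`, then no sequence of
polynomials of total degree at most `D_n` weakly separates `(P_n)` and `(Q_n)`. -/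
theorem statement_1 (N : ℕ → ℕ) (D : ℕ → ℕ)
    (P Q : ∀ n, Measure (Fin (N n) → ℝ))
    (hP : ∀ n, IsProbabilityMeasure (P n)) (hQ : ∀ n, IsProbabilityMeasure (Q n))
    (hPmom : ∀ n (g : MvPolynomial (Fin (N n)) ℝ), Integrable (fun y => eval y g) (P n))
    (hQmom : ∀ n (g : MvPolynomial (Fin (N n)) ℝ), Integrable (fun y => eval y g) (Q n))
    (hAdv : (fun n => Adv (P n) (Q n) (D n) - 1) =o[atTop] fun _ => (1 : ℝ)) :
    ¬ ∃ f : ∀ n, MvPolynomial (Fin (N n)) ℝ,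
        (∀ n, (f n).totalDegree ≤ D n) ∧ WeaklySeparates P Q f := by
  exact statement_1' N D P Q hP hQ hPmom hQmom hAdv

end
end

section
/- Fix N and D, and let P and Q be probability measures on ℝ^N with finite moments of all orders. Suppose h_0, …, h_m are real multivariate polynomials in N variables of total degree at most D that form a vector-space basis of the space of all such polynomials, and that they are orthonormal with respect to Q, i.e. E_{Y∼Q}[h_i(Y) h_j(Y)] = 1 if i = j and 0 otherwise. Then Adv_{≤D}(P,Q)² = Σ_{i=0}^m ( E_{Y∼P}[h_i(Y)] )². -/
open MeasureTheory MvPolynomial Filter Asymptotics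

noncomputable section

/-- if `h_0, …, h_m` is a basis of the space of polynomials of total degree
at most `D` that is orthonormal with respect to `Q`, then
`Adv_{≤D}(P,Q)² = Σ_i (E_P[h_i])²`. -/
theorem statement_2 (N D m : ℕ) (P Q : Measure (Fin N → ℝ))
    (hP : IsProbabilityMeasure P) (hQ : IsProbabilityMeasure Q)
    (hPmom : ∀ g : MvPolynomial (Fin N) ℝ, Integrable (fun y => eval y g) P)
    (hQmom : ∀ g : MvPolynomial (Fin N) ℝ, Integrable (fun y => eval y g) Q)
    (h : Fin (m + 1) → MvPolynomial (Fin N) ℝ)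
    (hdeg : ∀ i, (h i).totalDegree ≤ D)
    (hli : LinearIndependent ℝ h)
    (hspan : ∀ g : MvPolynomial (Fin N) ℝ, g.totalDegree ≤ D →
      g ∈ Submodule.span ℝ (Set.range h))
    (horth : ∀ i j, (∫ y, eval y (h i) * eval y (h j) ∂Q) = if i = j then (1 : ℝ) else 0) :
    Adv P Q D ^ 2 = ∑ i, (∫ y, eval y (h i) ∂P) ^ 2 := by
  set a : Fin (m + 1) → ℝ := fun i => ∫ y, eval y (h i) ∂P with ha
  set A : ℝ := ∑ i, a i ^ 2 with hAdef
  have hAnn : 0 ≤ A := Finset.sum_nonneg fun i _ => sq_nonneg _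
  -- integral of a linear combination against P
  have key1 : ∀ c : Fin (m + 1) → ℝ,
      ∫ y, eval y (∑ i, c i • h i) ∂P = ∑ i, c i * a i := by
    intro c
    have : (fun y => eval y (∑ i, c i • h i))
        = fun y => ∑ i, c i * eval y (h i) := by
      funext y; simp [map_sum, smul_eval]
    rw [this, integral_finset_sum _ (fun i _ => (hPmom (h i)).const_mul _)]
    simp_rw [integral_const_mul]; rfl
  -- integral of the square of a linear combination against Q
  have key2 : ∀ c : Fin (m + 1) → ℝ,
      ∫ y, (eval y (∑ i, c i • h i)) ^ 2 ∂Q = ∑ i, c i ^ 2 := by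
    intro c
    have h1 : (fun y => (eval y (∑ i, c i • h i)) ^ 2)
        = fun y => ∑ i, ∑ j, (c i * c j) * (eval y (h i) * eval y (h j)) := by
      funext y
      rw [map_sum, sq, Finset.sum_mul_sum]
      refine Finset.sum_congr rfl fun i _ => Finset.sum_congr rfl fun j _ => ?_
      simp [smul_eval]; ring
    have hint : ∀ i j : Fin (m + 1),
        Integrable (fun y => (c i * c j) * (eval y (h i) * eval y (h j))) Q := by
      intro i j
      have : (fun y => (c i * c j) * (eval y (h i) * eval y (h j)))
          = fun y => (c i * c j) * eval y (h i * h j) := by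
        funext y; simp [map_mul]
      rw [this]; exact (hQmom _).const_mul _
    rw [h1, integral_finset_sum _ (fun i _ =>
      integrable_finset_sum _ (fun j _ => hint i j))]
    have : ∀ i : Fin (m + 1),
        ∫ y, ∑ j, (c i * c j) * (eval y (h i) * eval y (h j)) ∂Q = c i ^ 2 := by
      intro i
      rw [integral_finset_sum _ (fun j _ => hint i j)]
      have : ∀ j : Fin (m + 1),
          ∫ y, (c i * c j) * (eval y (h i) * eval y (h j)) ∂Q
            = (c i * c j) * (if i = j then (1 : ℝ) else 0) := by
        intro j; rw [integral_const_mul, horth]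
      simp_rw [this]
      simp [Finset.mul_sum, Finset.sum_ite_eq, sq]
    simp_rw [this]
  -- A is positive
  have hApos : 0 < A := by
    rcases hAnn.lt_or_eq with hlt | heq
    · exact hlt
    · exfalso
      have hzero : ∀ i, a i = 0 := by
        intro i
        have := (Finset.sum_eq_zero_iff_of_nonneg
          (fun j _ => sq_nonneg (a j))).mp heq.symm i (Finset.mem_univ i)
        exact pow_eq_zero_iff (n := 2) (by norm_num) |>.mp this
      have h1 : (1 : MvPolynomial (Fin N) ℝ) ∈ Submodule.span ℝ (Set.range h) :=
        hspan 1 (by simp [totalDegree_one])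
      obtain ⟨c, hc⟩ := (Submodule.mem_span_range_iff_exists_fun ℝ).mp h1
      have : ∫ y, eval y (∑ i, c i • h i) ∂P = 1 := by
        rw [hc]; simp
      rw [key1] at this
      simp [hzero] at this
  -- the witness polynomial
  set f₀ : MvPolynomial (Fin N) ℝ := ∑ i, a i • h i with hf₀
  have hf₀deg : f₀.totalDegree ≤ D := by
    refine le_trans (totalDegree_finset_sum _ _) ?_
    exact Finset.sup_le fun i _ => le_trans (totalDegree_smul_le _ _) (hdeg i)
  have hf₀P : ∫ y, eval y f₀ ∂P = A := by
    rw [hf₀, key1]; simp [hAdef, sq]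
  have hf₀Q : ∫ y, (eval y f₀) ^ 2 ∂Q = A := by
    rw [hf₀, key2]
  set S : Set ℝ := {r : ℝ | ∃ f : MvPolynomial (Fin N) ℝ, f.totalDegree ≤ D ∧
    0 < (∫ y, (eval y f) ^ 2 ∂Q) ∧
    r = (∫ y, eval y f ∂P) / Real.sqrt (∫ y, (eval y f) ^ 2 ∂Q)} with hS
  have hmem : Real.sqrt A ∈ S := by
    refine ⟨f₀, hf₀deg, by rw [hf₀Q]; exact hApos, ?_⟩
    rw [hf₀P, hf₀Q, Real.div_sqrt]
  have hub : ∀ r ∈ S, r ≤ Real.sqrt A := by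
    rintro r ⟨f, hfdeg, hfQ, rfl⟩
    obtain ⟨c, hc⟩ := (Submodule.mem_span_range_iff_exists_fun ℝ).mp (hspan f hfdeg)
    have hEP : ∫ y, eval y f ∂P = ∑ i, c i * a i := by rw [← hc, key1]
    have hEQ : ∫ y, (eval y f) ^ 2 ∂Q = ∑ i, c i ^ 2 := by rw [← hc, key2]
    rcases le_or_gt (∫ y, eval y f ∂P) 0 with hneg | hpos
    · exact le_trans (div_nonpos_of_nonpos_of_nonneg hneg (Real.sqrt_nonneg _))
        (Real.sqrt_nonneg _)
    · have hCS : (∫ y, eval y f ∂P) ^ 2 ≤ (∫ y, (eval y f) ^ 2 ∂Q) * A := by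
        rw [hEP, hEQ, hAdef]
        exact Finset.sum_mul_sq_le_sq_mul_sq _ _ _
      rw [div_le_iff₀ (Real.sqrt_pos.mpr hfQ)]
      have h2 : Real.sqrt A * Real.sqrt (∫ y, (eval y f) ^ 2 ∂Q)
          = Real.sqrt ((∫ y, (eval y f) ^ 2 ∂Q) * A) := by
        rw [mul_comm, Real.sqrt_mul hfQ.le]
      rw [h2]
      calc ∫ y, eval y f ∂P
          = Real.sqrt ((∫ y, eval y f ∂P) ^ 2) := by
            rw [Real.sqrt_sq hpos.le]
        _ ≤ Real.sqrt ((∫ y, (eval y f) ^ 2 ∂Q) * A) := Real.sqrt_le_sqrt hCS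
  have hsup : Adv P Q D = Real.sqrt A := by
    have : Adv P Q D = sSup S := rfl
    rw [this]
    exact le_antisymm (csSup_le ⟨_, hmem⟩ hub) (le_csSup ⟨_, hub⟩ hmem)
  rw [hsup, Real.sq_sqrt hAnn]

end
end

section
/- Fix N and D, and let P and Q be probability measures on ℝ^N with finite moments of all orders. Assume the quadratic form f ↦ E_{Y∼Q}[f(Y)²] is positive definite on the space of real multivariate polynomials in N variables of total degree at most D (i.e., E_{Y∼Q}[f(Y)²] > 0 for every nonzero such f). Then the supremum, over polynomials f of total degree at most D satisfying E_{Y∼Q}[f(Y)] = 0 and E_{Y∼Q}[f(Y)²] > 0, of E_{Y∼P}[f(Y)] / sqrt(E_{Y∼Q}[f(Y)²]) equals sqrt(Adv_{≤D}(P,Q)² − 1). -/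
open MeasureTheory MvPolynomial Filter Asymptotics

noncomputable section

/-- if the quadratic form `f ↦ E_Q[f²]` is positive definite on polynomials of
total degree at most `D`, then the supremum over such polynomials that are centered under `Q`
(i.e. `E_Q[f] = 0`) of `E_P[f]/sqrt(E_Q[f²])` equals `sqrt(Adv_{≤D}(P,Q)² − 1)`. -/
theorem statement_3 (N D : ℕ) (P Q : Measure (Fin N → ℝ))
    (hP : IsProbabilityMeasure P) (hQ : IsProbabilityMeasure Q)
    (hPmom : ∀ g : MvPolynomial (Fin N) ℝ, Integrable (fun y => eval y g) P)
    (hQmom : ∀ g : MvPolynomial (Fin N) ℝ, Integrable (fun y => eval y g) Q)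
    (hpd : ∀ g : MvPolynomial (Fin N) ℝ, g.totalDegree ≤ D → g ≠ 0 →
      0 < ∫ y, (eval y g) ^ 2 ∂Q) :
    sSup {r : ℝ | ∃ g : MvPolynomial (Fin N) ℝ, g.totalDegree ≤ D ∧
        (∫ y, eval y g ∂Q) = 0 ∧ 0 < (∫ y, (eval y g) ^ 2 ∂Q) ∧
        r = (∫ y, eval y g ∂P) / Real.sqrt (∫ y, (eval y g) ^ 2 ∂Q)}
      = Real.sqrt (Adv P Q D ^ 2 - 1) := by
  classical
  set S : Set ℝ := {r : ℝ | ∃ f : MvPolynomial (Fin N) ℝ, f.totalDegree ≤ D ∧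
    0 < (∫ y, (eval y f) ^ 2 ∂Q) ∧
    r = (∫ y, eval y f ∂P) / Real.sqrt (∫ y, (eval y f) ^ 2 ∂Q)} with hS_def
  set T : Set ℝ := {r : ℝ | ∃ g : MvPolynomial (Fin N) ℝ, g.totalDegree ≤ D ∧
        (∫ y, eval y g ∂Q) = 0 ∧ 0 < (∫ y, (eval y g) ^ 2 ∂Q) ∧
        r = (∫ y, eval y g ∂P) / Real.sqrt (∫ y, (eval y g) ^ 2 ∂Q)} with hT_def
  have hAdv : Adv P Q D = sSup S := rfl
  rw [hAdv]
  -- basic integrability facts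
  have hIntQ2 : ∀ g : MvPolynomial (Fin N) ℝ, Integrable (fun y => (eval y g) ^ 2) Q := by
    intro g
    have h : (fun y => eval y (g ^ 2)) = fun y => (eval y g) ^ 2 := by
      funext y; rw [map_pow]
    have := hQmom (g ^ 2)
    rwa [h] at this
  have hq_nonneg : ∀ g : MvPolynomial (Fin N) ℝ, 0 ≤ ∫ y, (eval y g) ^ 2 ∂Q :=
    fun g => integral_nonneg fun y => sq_nonneg _
  -- combining a centered polynomial with a constant
  have comb : ∀ (g : MvPolynomial (Fin N) ℝ) (c : ℝ), (∫ y, eval y g ∂Q) = 0 →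
      (∫ y, (eval y (g + C c)) ^ 2 ∂Q) = (∫ y, (eval y g) ^ 2 ∂Q) + c ^ 2 ∧
      (∫ y, eval y (g + C c) ∂P) = (∫ y, eval y g ∂P) + c := by
    intro g c hg0
    constructor
    · have h1 : (fun y => (eval y (g + C c)) ^ 2)
          = fun y => ((eval y g) ^ 2 + (2 * c) * eval y g) + c ^ 2 := by
        funext y; simp only [map_add, eval_C]; ring
      have i1 : Integrable (fun y => (2 * c) * eval y g) Q := (hQmom g).const_mul (2 * c)
      have i2 : Integrable (fun y => (eval y g) ^ 2 + (2 * c) * eval y g) Q := (hIntQ2 g).add i1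
      rw [h1, integral_add i2 (integrable_const _), integral_add (hIntQ2 g) i1,
        integral_const_mul, hg0, integral_const]
      simp
    · have h1 : (fun y => eval y (g + C c)) = fun y => eval y g + c := by
        funext y; simp only [map_add, eval_C]
      rw [h1, integral_add (hPmom g) (integrable_const _), integral_const]
      simp
  have hdeg : ∀ (g : MvPolynomial (Fin N) ℝ) (c : ℝ), g.totalDegree ≤ D →
      (g + C c).totalDegree ≤ D := by
    intro g c hg
    refine le_trans (totalDegree_add _ _) ?_
    simp [totalDegree_C, hg]
  -- decomposition f = g + C c with g centered
  have decomp : ∀ f : MvPolynomial (Fin N) ℝ, f.totalDegree ≤ D →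
      ∃ (g : MvPolynomial (Fin N) ℝ) (c : ℝ), f = g + C c ∧ g.totalDegree ≤ D ∧
        (∫ y, eval y g ∂Q) = 0 := by
    intro f hf
    refine ⟨f - C (∫ y, eval y f ∂Q), ∫ y, eval y f ∂Q, by ring, ?_, ?_⟩
    · refine le_trans (totalDegree_sub _ _) ?_
      simp [totalDegree_C, hf]
    · have h1 : (fun y => eval y (f - C (∫ y, eval y f ∂Q)))
          = fun y => eval y f + (-(∫ y, eval y f ∂Q)) := by
        funext y; simp only [map_sub, eval_C]; ring
      rw [h1, integral_add (hQmom f) (integrable_const _), integral_const]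
      simp
  -- 1 ∈ S
  have honeq : (∫ y, (eval y (1 : MvPolynomial (Fin N) ℝ)) ^ 2 ∂Q) = 1 := by simp
  have honep : (∫ y, eval y (1 : MvPolynomial (Fin N) ℝ) ∂P) = 1 := by simp
  have hone : (1 : ℝ) ∈ S := by
    refine ⟨1, by simp [totalDegree_one], by rw [honeq]; norm_num, ?_⟩
    rw [honeq, honep, Real.sqrt_one, div_one]
  -- T is closed under negation
  have hnegT : ∀ t ∈ T, -t ∈ T := by
    rintro t ⟨g, hgd, hg0, hgq, rfl⟩
    have e1 : (fun y => eval y (-g)) = fun y => -(eval y g) := by funext y; simp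
    have e2 : (fun y => (eval y (-g)) ^ 2) = fun y => (eval y g) ^ 2 := by
      funext y; simp
    refine ⟨-g, by simpa [totalDegree_neg] using hgd, ?_, ?_, ?_⟩
    · rw [e1, integral_neg, hg0, neg_zero]
    · rw [e2]; exact hgq
    · rw [e1, e2, integral_neg, neg_div]
  -- key bound: if B bounds T from above, then √(1+B²) bounds S
  have boundS : ∀ B : ℝ, 0 ≤ B → (∀ t ∈ T, t ≤ B) → ∀ s ∈ S, s ≤ Real.sqrt (1 + B ^ 2) := by
    intro B hB hTB s hs
    obtain ⟨f, hfd, hfq, rfl⟩ := hs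
    obtain ⟨g, c, rfl, hgd, hg0⟩ := decomp f hfd
    obtain ⟨hq_eq, hp_eq⟩ := comb g c hg0
    by_cases hpf : (∫ y, eval y (g + C c) ∂P) ≤ 0
    · exact le_trans (div_nonpos_of_nonpos_of_nonneg hpf (Real.sqrt_nonneg _))
        (Real.sqrt_nonneg _)
    push_neg at hpf
    rcases eq_or_lt_of_le (hq_nonneg g) with hqg | hqg
    · -- q g = 0 forces g = 0
      have hg_zero : g = 0 := by
        by_contra hne
        have := hpd g hgd hne
        rw [← hqg] at this
        exact lt_irrefl 0 this
      subst hg_zero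
      have hpz : (∫ y, eval y (0 : MvPolynomial (Fin N) ℝ) ∂P) = 0 := by simp
      have hqz : (∫ y, (eval y (0 : MvPolynomial (Fin N) ℝ)) ^ 2 ∂Q) = 0 := by simp
      have hc : 0 < c := by rw [hp_eq, hpz, zero_add] at hpf; exact hpf
      rw [hq_eq, hp_eq, hpz, hqz, zero_add, zero_add, Real.sqrt_sq hc.le, div_self hc.ne']
      calc (1 : ℝ) = Real.sqrt 1 := Real.sqrt_one.symm
        _ ≤ Real.sqrt (1 + B ^ 2) := Real.sqrt_le_sqrt (by nlinarith)
    · -- q g > 0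
      have htT : ((∫ y, eval y g ∂P) / Real.sqrt (∫ y, (eval y g) ^ 2 ∂Q)) ∈ T :=
        ⟨g, hgd, hg0, hqg, rfl⟩
      have htB := hTB _ htT
      have hb : 0 < Real.sqrt (∫ y, (eval y g) ^ 2 ∂Q) := Real.sqrt_pos.mpr hqg
      have hpg : (∫ y, eval y g ∂P) ≤ B * Real.sqrt (∫ y, (eval y g) ^ 2 ∂Q) := by
        rw [div_le_iff₀ hb] at htB; linarith
      rw [div_le_iff₀ (Real.sqrt_pos.mpr hfq),
        ← Real.sqrt_mul (by positivity : (0:ℝ) ≤ 1 + B ^ 2)]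
      refine Real.le_sqrt_of_sq_le ?_
      have hb2 : Real.sqrt (∫ y, (eval y g) ^ 2 ∂Q) ^ 2 = ∫ y, (eval y g) ^ 2 ∂Q :=
        Real.sq_sqrt hqg.le
      rw [hq_eq, hp_eq, ← hb2]
      set b := Real.sqrt (∫ y, (eval y g) ^ 2 ∂Q)
      have hpf' : 0 < (∫ y, eval y g ∂P) + c := by rw [hp_eq] at hpf; exact hpf
      have h2 : 0 ≤ B * b + (∫ y, eval y g ∂P) + 2 * c := by linarith
      nlinarith [sq_nonneg (B * c - b), mul_nonneg (sub_nonneg.mpr hpg) h2]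
  -- from a nonnegative element of T, produce an element of S with s² = 1 + t²
  have TtoS : ∀ t ∈ T, 0 ≤ t → ∃ s ∈ S, 0 ≤ s ∧ s ^ 2 = 1 + t ^ 2 := by
    rintro t ⟨g, hgd, hg0, hgq, rfl⟩ ht
    have hb : 0 < Real.sqrt (∫ y, (eval y g) ^ 2 ∂Q) := Real.sqrt_pos.mpr hgq
    have hb2 : Real.sqrt (∫ y, (eval y g) ^ 2 ∂Q) ^ 2 = ∫ y, (eval y g) ^ 2 ∂Q :=
      Real.sq_sqrt hgq.le
    rcases eq_or_lt_of_le ht with ht0 | htpos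
    · exact ⟨1, hone, by norm_num, by rw [← ht0]; norm_num⟩
    · have hpg : 0 < (∫ y, eval y g ∂P) := by
        by_contra h
        push_neg at h
        have : (∫ y, eval y g ∂P) / Real.sqrt (∫ y, (eval y g) ^ 2 ∂Q) ≤ 0 :=
          div_nonpos_of_nonpos_of_nonneg h hb.le
        linarith
      set c : ℝ := (∫ y, (eval y g) ^ 2 ∂Q) / (∫ y, eval y g ∂P) with hc_def
      have hc : 0 < c := div_pos hgq hpg
      obtain ⟨hq_eq, hp_eq⟩ := comb g c hg0
      have hfq : 0 < (∫ y, (eval y (g + C c)) ^ 2 ∂Q) := by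
        rw [hq_eq]; positivity
      refine ⟨_, ⟨g + C c, hdeg g c hgd, hfq, rfl⟩, ?_, ?_⟩
      · apply div_nonneg _ (Real.sqrt_nonneg _)
        rw [hp_eq]; positivity
      · have e1 : ((∫ y, eval y (g + C c) ∂P) / Real.sqrt (∫ y, (eval y (g + C c)) ^ 2 ∂Q)) ^ 2
            = (∫ y, eval y (g + C c) ∂P) ^ 2 / (∫ y, (eval y (g + C c)) ^ 2 ∂Q) := by
          rw [div_pow, Real.sq_sqrt hfq.le]
        have e2 : ((∫ y, eval y g ∂P) / Real.sqrt (∫ y, (eval y g) ^ 2 ∂Q)) ^ 2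
            = (∫ y, eval y g ∂P) ^ 2 / (∫ y, (eval y g) ^ 2 ∂Q) := by
          rw [div_pow, hb2]
        rw [e1, e2, hq_eq, hp_eq, hc_def]
        field_simp
        ring
  -- nonnegativity of sSup T
  have hT0 : 0 ≤ sSup T := by
    rcases Set.eq_empty_or_nonempty T with hTe | ⟨t, htT⟩
    · rw [hTe, Real.sSup_empty]
    · by_cases hTb : BddAbove T
      · have h1 := le_csSup hTb htT
        have h2 := le_csSup hTb (hnegT t htT)
        linarith
      · rw [Real.sSup_of_not_bddAbove hTb]
  by_cases hTb : BddAbove T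
  · -- bounded case
    set M := sSup T with hM_def
    have hMub : ∀ t ∈ T, t ≤ M := fun t ht => le_csSup hTb ht
    have hSub : ∀ s ∈ S, s ≤ Real.sqrt (1 + M ^ 2) := boundS M hT0 hMub
    have hSbdd : BddAbove S := ⟨Real.sqrt (1 + M ^ 2), hSub⟩
    have hA1 : (1 : ℝ) ≤ sSup S := le_csSup hSbdd hone
    have hAle : sSup S ≤ Real.sqrt (1 + M ^ 2) := Real.sSup_le hSub (Real.sqrt_nonneg _)
    have hMle : M ≤ Real.sqrt (sSup S ^ 2 - 1) := by
      refine Real.sSup_le ?_ (Real.sqrt_nonneg _)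
      intro t ht
      by_cases htn : t ≤ 0
      · exact le_trans htn (Real.sqrt_nonneg _)
      push_neg at htn
      obtain ⟨s, hsS, hs0, hs2⟩ := TtoS t ht htn.le
      have hsA : s ≤ sSup S := le_csSup hSbdd hsS
      have ht2 : t ^ 2 ≤ sSup S ^ 2 - 1 := by nlinarith
      calc t = Real.sqrt (t ^ 2) := (Real.sqrt_sq htn.le).symm
        _ ≤ Real.sqrt (sSup S ^ 2 - 1) := Real.sqrt_le_sqrt ht2
    have hMge : Real.sqrt (sSup S ^ 2 - 1) ≤ M := by
      have hA2 : sSup S ^ 2 ≤ 1 + M ^ 2 := by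
        have h0 : (0:ℝ) ≤ sSup S := le_trans zero_le_one hA1
        nlinarith [Real.sq_sqrt (by positivity : (0:ℝ) ≤ 1 + M ^ 2),
          Real.sqrt_nonneg (1 + M ^ 2)]
      calc Real.sqrt (sSup S ^ 2 - 1) ≤ Real.sqrt (M ^ 2) :=
            Real.sqrt_le_sqrt (by linarith)
        _ = M := Real.sqrt_sq hT0
    exact le_antisymm hMle hMge
  · -- unbounded case: S is also unbounded
    have hSb : ¬BddAbove S := by
      intro ⟨A, hA⟩
      apply hTb
      refine ⟨max A 0, ?_⟩
      intro t ht
      by_cases htn : t ≤ 0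
      · exact le_trans htn (le_max_right _ _)
      push_neg at htn
      obtain ⟨s, hsS, hs0, hs2⟩ := TtoS t ht htn.le
      have hsA : s ≤ A := hA hsS
      have : t ≤ s := by nlinarith
      exact le_trans this (le_trans hsA (le_max_left _ _))
    rw [Real.sSup_of_not_bddAbove hTb, Real.sSup_of_not_bddAbove hSb]
    rw [show (0:ℝ) ^ 2 - 1 = -1 by norm_num]
    rw [Real.sqrt_eq_zero_of_nonpos (by norm_num)]

end
end
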